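/- Let Ω ⊂ ℝ^{n+1} be a uniform (1-sided NTA) domain with constants c₁ ∈ (0,1), C₁ > 1: any X⁺, X⁻ ∈ Ω can be joined by a path γ ⊂ Ω of length ≤ C₁|X⁺ − X⁻| with dist(Z, ∂Ω) ≥ c₁ dist(Z, {X⁺, X⁻}) for all Z ∈ γ. Suppose X^± ∈ B(0,r) lie on opposite sides of the hyperplane P = {x_{n+1} = 0} with |X^±_{n+1}| > 4ζr, and suppose every point of P ∩ B(0, (2C₁+1)r) is within distance η(2C₁+1)r of ∂Ω. If η(2C₁+1) < 4 c₁ ζ, then X⁺ and X⁻ cannot both lie in Ω. -/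
import Mathlib


open Metric Set
open scoped ENNReal

noncomputable section

lemma coord_le_dist (n : ℕ) (i : Fin (n + 1)) (x y : EuclideanSpace ℝ (Fin (n + 1))) :
    |x i - y i| ≤ dist x y := by
  rw [EuclideanSpace.dist_eq]
  have h1 : |x i - y i| = Real.sqrt ((x i - y i) ^ 2) := by
    rw [Real.sqrt_sq_eq_abs]
  rw [h1]
  apply Real.sqrt_le_sqrt
  have := Finset.single_le_sum (f := fun j => dist (x j) (y j) ^ 2)
    (fun j _ => by positivity) (Finset.mem_univ i)
  simpa [Real.dist_eq, sq_abs] using this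

/-- The crossing argument in the proof of Proposition 2.3: in a uniform (1-sided NTA)
domain `Ω ⊂ ℝ^{n+1}` with constants `c₁ ∈ (0,1)`, `C₁ > 1`, if `X⁺, X⁻ ∈ B(0,r)` lie on
opposite sides of the hyperplane `P = {x_{n+1} = 0}` with `|X^±_{n+1}| > 4ζr`, every
point of `P ∩ B(0,(2C₁+1)r)` is within `η(2C₁+1)r` of `∂Ω`, and `η(2C₁+1) < 4c₁ζ`,
then `X⁺` and `X⁻` cannot both lie in `Ω`. -/
theorem stmt19 (n : ℕ) (Ω : Set (EuclideanSpace ℝ (Fin (n + 1))))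
    (c₁ C₁ : ℝ) (hc₁ : 0 < c₁) (hc₁' : c₁ < 1) (hC₁ : 1 < C₁)
    (hunif : ∀ X ∈ Ω, ∀ Y ∈ Ω, ∃ γ : ℝ → EuclideanSpace ℝ (Fin (n + 1)),
      ContinuousOn γ (Set.Icc 0 1) ∧ γ 0 = X ∧ γ 1 = Y ∧
      (∀ t ∈ Set.Icc (0 : ℝ) 1, γ t ∈ Ω) ∧
      eVariationOn γ (Set.Icc 0 1) ≤ ENNReal.ofReal (C₁ * dist X Y) ∧
      ∀ t ∈ Set.Icc (0 : ℝ) 1,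
        c₁ * min (dist (γ t) X) (dist (γ t) Y) ≤ Metric.infDist (γ t) (frontier Ω))
    (r ζ η : ℝ) (hr : 0 < r) (hζ : 0 < ζ) (hη : 0 < η)
    (Xp Xm : EuclideanSpace ℝ (Fin (n + 1)))
    (hXp : Xp ∈ ball (0 : EuclideanSpace ℝ (Fin (n + 1))) r)
    (hXm : Xm ∈ ball (0 : EuclideanSpace ℝ (Fin (n + 1))) r)
    (hXpz : 4 * ζ * r < Xp (Fin.last n))
    (hXmz : Xm (Fin.last n) < -(4 * ζ * r))
    (happrox : ∀ Z : EuclideanSpace ℝ (Fin (n + 1)), Z (Fin.last n) = 0 →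
      Z ∈ ball (0 : EuclideanSpace ℝ (Fin (n + 1))) ((2 * C₁ + 1) * r) →
      Metric.infDist Z (frontier Ω) ≤ η * (2 * C₁ + 1) * r)
    (hsmall : η * (2 * C₁ + 1) < 4 * c₁ * ζ) :
    ¬(Xp ∈ Ω ∧ Xm ∈ Ω) := by
  rintro ⟨hp, hm⟩
  obtain ⟨γ, hγc, hγ0, hγ1, hγΩ, hγvar, hγcork⟩ := hunif Xp hp Xm hm
  -- continuity of the last coordinate along γ
  have hcoord : ContinuousOn (fun t => γ t (Fin.last n)) (Set.Icc 0 1) := by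
    exact (EuclideanSpace.proj (𝕜 := ℝ) (Fin.last n)).continuous.comp_continuousOn hγc
  -- IVT: find t with γ t (last) = 0
  have h01 : (0 : ℝ) ≤ 1 := zero_le_one
  have hivt := intermediate_value_Icc' h01 hcoord
  have h0mem : (0 : ℝ) ∈ Set.Icc (γ 1 (Fin.last n)) (γ 0 (Fin.last n)) := by
    rw [hγ0, hγ1]
    constructor
    · nlinarith
    · nlinarith
  obtain ⟨t, ht, htz⟩ := hivt h0mem
  set Z := γ t with hZ
  have htz' : Z (Fin.last n) = 0 := htz
  -- distance bounds
  have hdXpXm : dist Xp Xm < 2 * r := by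
    have h1 : dist Xp 0 < r := mem_ball.mp hXp
    have h2 : dist Xm 0 < r := mem_ball.mp hXm
    have h3 := dist_triangle Xp (0 : EuclideanSpace ℝ (Fin (n + 1))) Xm
    rw [dist_comm (0 : EuclideanSpace ℝ (Fin (n + 1))) Xm] at h3
    linarith
  have hdZXp : dist Z Xp ≤ C₁ * dist Xp Xm := by
    have h0 : (0 : ℝ) ∈ Set.Icc (0 : ℝ) 1 := ⟨le_refl _, zero_le_one⟩
    have hed := eVariationOn.edist_le γ h0 ht
    have hle : edist (γ 0) (γ t) ≤ ENNReal.ofReal (C₁ * dist Xp Xm) :=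
      hed.trans hγvar
    have hnn : (0 : ℝ) ≤ C₁ * dist Xp Xm := by positivity
    rw [edist_le_ofReal hnn] at hle
    calc dist Z Xp = dist (γ 0) (γ t) := by rw [hγ0, dist_comm]
      _ ≤ C₁ * dist Xp Xm := hle
  have hZball : Z ∈ ball (0 : EuclideanSpace ℝ (Fin (n + 1))) ((2 * C₁ + 1) * r) := by
    rw [mem_ball]
    have := dist_triangle Z Xp (0 : EuclideanSpace ℝ (Fin (n + 1)))
    rw [mem_ball] at hXp
    have hC2 : C₁ * dist Xp Xm ≤ C₁ * (2 * r) := by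
      apply mul_le_mul_of_nonneg_left hdXpXm.le (by linarith)
    nlinarith [dist_nonneg (x := Z) (y := Xp)]
  -- infDist upper bound from approximation
  have hup : Metric.infDist Z (frontier Ω) ≤ η * (2 * C₁ + 1) * r :=
    happrox Z htz' hZball
  -- infDist lower bound from corkscrew
  have hdp : 4 * ζ * r < dist Z Xp := by
    have := coord_le_dist n (Fin.last n) Z Xp
    rw [htz'] at this
    calc 4 * ζ * r < Xp (Fin.last n) := hXpz
      _ ≤ |0 - Xp (Fin.last n)| := by rw [zero_sub, abs_neg]; exact le_abs_self _
      _ ≤ dist Z Xp := this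
  have hdm : 4 * ζ * r < dist Z Xm := by
    have := coord_le_dist n (Fin.last n) Z Xm
    rw [htz'] at this
    calc 4 * ζ * r < -(Xm (Fin.last n)) := by linarith
      _ ≤ |0 - Xm (Fin.last n)| := by rw [zero_sub]; exact le_abs_self _
      _ ≤ dist Z Xm := this
  have hcork := hγcork t ht
  rw [← hZ] at hcork
  have hmin : 4 * ζ * r < min (dist Z Xp) (dist Z Xm) := lt_min hdp hdm
  have : c₁ * (4 * ζ * r) < Metric.infDist Z (frontier Ω) := by
    calc c₁ * (4 * ζ * r) < c₁ * min (dist Z Xp) (dist Z Xm) := by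
          exact mul_lt_mul_of_pos_left hmin hc₁
      _ ≤ _ := hcork
  nlinarith
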